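/- Suppose 𝒢 has at least one zealot, the subgraph induced on the persuadable nodes 𝒫 is connected, and at least one persuadable node is adjacent to a zealot. Let x̄ be the harmonic state, i.e., the unique steady state of F_0 (the γ = 0 dynamics) for the fixed zealot opinions. Then there exist ε > 0, an open neighborhood U ⊆ ℝ^𝒫 of the persuadable part of x̄, and a unique continuously differentiable function h : [0, ε) → U such that: (1) h(0) equals the persuadable part of x̄; (2) for every γ ∈ [0, ε), the opinion vector with persuadable part h(γ) and the fixed zealot opinions is the unique steady state of F_γ whose persuadable part lies in U; and (3) for every γ ∈ [0, ε), this steady state is linearly stable. -/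

import Mathlib

open Finset Filter

namespace SBCM

variable {V : Type*} [Fintype V] [DecidableEq V]

/-- Sigmoidal influence weight. -/
noncomputable def wt (G : SimpleGraph V) [DecidableRel G.Adj] (γ δ : ℝ) (x : V → ℝ)
    (i j : V) : ℝ :=
  if G.Adj i j then 1 / (1 + Real.exp (γ * (x i - x j) ^ 2 - γ * δ)) else 0

/-- SBCM update operator. -/
noncomputable def F (G : SimpleGraph V) [DecidableRel G.Adj] (Z : Finset V) (γ δ : ℝ)
    (x : V → ℝ) (i : V) : ℝ :=
  if i ∈ Z then 0
  else (∑ j, wt G γ δ x i j * (x j - x i)) / (∑ j, wt G γ δ x i j)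

/-- Jacobian block over the persuadable nodes. -/
noncomputable def Jp (G : SimpleGraph V) [DecidableRel G.Adj] (Z : Finset V) (γ δ : ℝ)
    (x : V → ℝ) : Matrix {v : V // v ∉ Z} {v : V // v ∉ Z} ℝ :=
  fun i j => fderiv ℝ (fun y : V → ℝ => F G Z γ δ y i.val) x (Pi.single (j : V) (1 : ℝ))

/-- `μ` is a (real) eigenvalue of the matrix `M`. -/
def HasEig {n : Type*} [Fintype n] (M : Matrix n n ℝ) (μ : ℝ) : Prop :=
  ∃ φ : n → ℝ, φ ≠ 0 ∧ M.mulVec φ = μ • φ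

/-- All eigenvalues of `M` are strictly negative. -/
def LinStable {n : Type*} [Fintype n] (M : Matrix n n ℝ) : Prop :=
  ∀ μ : ℝ, HasEig M μ → μ < 0

/-- `M` has a strictly positive eigenvalue. -/
def LinUnstable {n : Type*} [Fintype n] (M : Matrix n n ℝ) : Prop :=
  ∃ μ : ℝ, 0 < μ ∧ HasEig M μ

end SBCM

namespace SBCM

/-- Glue a vector of persuadable opinions with the fixed zealot opinions of `x̄`. -/
noncomputable def glue {V : Type*} [Fintype V] [DecidableEq V] (Z : Finset V)
    (xbar : V → ℝ) (p : {v : V // v ∉ Z} → ℝ) : V → ℝ :=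
  fun v => if h : v ∉ Z then p ⟨v, h⟩ else xbar v

end SBCM
namespace SBCM

section Aux

variable {V : Type*} [Fintype V] [DecidableEq V]
variable (G : SimpleGraph V) [DecidableRel G.Adj] (Z : Finset V)

/-- zero-extension of a persuadable vector, as a linear map -/
noncomputable def glin : ({v : V // v ∉ Z} → ℝ) →ₗ[ℝ] (V → ℝ) where
  toFun p := fun v => if h : v ∉ Z then p ⟨v, h⟩ else 0
  map_add' p q := by
    funext v
    by_cases h : v ∉ Z
    · simp [h]
    · simp [h, not_not.mp h]

  map_smul' c p := by
    funext v
    by_cases h : v ∉ Z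
    · simp [h]
    · simp [h, not_not.mp h]

lemma glin_apply_mem (p : {v : V // v ∉ Z} → ℝ) {v : V} (h : v ∈ Z) : glin Z p v = 0 := by
  simp [glin, h]

lemma glin_apply_not_mem (p : {v : V // v ∉ Z} → ℝ) {v : V} (h : v ∉ Z) :
    glin Z p v = p ⟨v, h⟩ := by simp [glin, h]

lemma glue_eq (xbar : V → ℝ) (p : {v : V // v ∉ Z} → ℝ) :
    glue Z xbar p = glin Z p + fun v => if v ∉ Z then 0 else xbar v := by
  funext v
  by_cases h : v ∉ Z
  · simp [glue, glin, h]
  · simp [glue, glin, h, not_not.mp h]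

lemma glue_self (xbar : V → ℝ) :
    glue Z xbar (fun v : {v : V // v ∉ Z} => xbar v.val) = xbar := by
  funext v
  by_cases h : v ∉ Z
  · simp [glue, h]
  · simp [glue, h, not_not.mp h]

/-- real-valued degree -/
noncomputable def dR (i : V) : ℝ := ∑ j, if G.Adj i j then (1 : ℝ) else 0

lemma dR_pos {i j₀ : V} (h : G.Adj i j₀) : 0 < dR G i := by
  apply Finset.sum_pos' (fun j _ => by positivity)
  exact ⟨j₀, Finset.mem_univ _, by simp [h]⟩

lemma dR_le_card (i : V) : dR G i ≤ (Fintype.card V : ℝ) := by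
  classical
  calc dR G i ≤ ∑ _j : V, (1 : ℝ) := Finset.sum_le_sum (fun j _ => by split <;> norm_num)
  _ = (Fintype.card V : ℝ) := by simp

lemma wt_nonneg (γ δ : ℝ) (x : V → ℝ) (i j : V) : 0 ≤ wt G γ δ x i j := by
  unfold wt; split
  · positivity
  · exact le_rfl

lemma wt_pos (γ δ : ℝ) (x : V → ℝ) {i j : V} (h : G.Adj i j) : 0 < wt G γ δ x i j := by
  unfold wt; rw [if_pos h]; positivity

lemma denom_pos (γ δ : ℝ) (x : V → ℝ) {i j₀ : V} (h : G.Adj i j₀) :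
    0 < ∑ j, wt G γ δ x i j :=
  Finset.sum_pos' (fun j _ => wt_nonneg G γ δ x i j)
    ⟨j₀, Finset.mem_univ _, wt_pos G γ δ x h⟩

lemma contDiff_wt (δ : ℝ) (i j : V) :
    ContDiff ℝ 2 (fun q : ℝ × (V → ℝ) => wt G q.1 δ q.2 i j) := by
  unfold wt
  by_cases h : G.Adj i j
  · simp only [h, if_true, one_div]
    have h2 : ContDiff ℝ 2 (fun q : ℝ × (V → ℝ) => q.1 * (q.2 i - q.2 j) ^ 2 - q.1 * δ) := by
      have hi : ContDiff ℝ 2 (fun q : ℝ × (V → ℝ) => q.2 i) :=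
        (contDiff_apply ℝ ℝ i).comp contDiff_snd
      have hj : ContDiff ℝ 2 (fun q : ℝ × (V → ℝ) => q.2 j) :=
        (contDiff_apply ℝ ℝ j).comp contDiff_snd
      exact (contDiff_fst.mul ((hi.sub hj).pow 2)).sub (contDiff_fst.mul contDiff_const)
    refine (contDiff_const.add (Real.contDiff_exp.comp h2)).inv ?_
    intro q
    have := Real.exp_pos (q.1 * (q.2 i - q.2 j) ^ 2 - q.1 * δ)
    positivity
  · simp only [h, if_false]
    exact contDiff_const

lemma contDiff_F (δ : ℝ) {i : V} (hi : i ∉ Z) {j₀ : V} (hj₀ : G.Adj i j₀) :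
    ContDiff ℝ 2 (fun q : ℝ × (V → ℝ) => F G Z q.1 δ q.2 i) := by
  unfold F
  simp only [if_neg hi]
  have hnum : ContDiff ℝ 2 (fun q : ℝ × (V → ℝ) => ∑ j, wt G q.1 δ q.2 i j * (q.2 j - q.2 i)) := by
    apply ContDiff.sum
    intro j _
    have hji : ContDiff ℝ 2 (fun q : ℝ × (V → ℝ) => q.2 j - q.2 i) :=
      ((contDiff_apply ℝ ℝ j).comp contDiff_snd).sub
        ((contDiff_apply ℝ ℝ i).comp contDiff_snd)
    exact (contDiff_wt G δ i j).mul hji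
  have hden : ContDiff ℝ 2 (fun q : ℝ × (V → ℝ) => ∑ j, wt G q.1 δ q.2 i j) :=
    ContDiff.sum (fun j _ => contDiff_wt G δ i j)
  exact hnum.div hden (fun q => ne_of_gt (denom_pos G q.1 δ q.2 hj₀))

end Aux

end SBCM
namespace SBCM

section Aux2

variable {V : Type*} [Fintype V] [DecidableEq V]
variable (G : SimpleGraph V) [DecidableRel G.Adj] (Z : Finset V)

/-- The linearization of `F` at `γ = 0`, acting on full opinion vectors, row `i`. -/
noncomputable def T0 (i : V) : (V → ℝ) →ₗ[ℝ] ℝ where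
  toFun y := (∑ j, (if G.Adj i j then (1 : ℝ) else 0) * y j) / dR G i - y i
  map_add' y z := by
    simp only [Pi.add_apply, mul_add, Finset.sum_add_distrib, add_div]; ring
  map_smul' c y := by
    simp only [Pi.smul_apply, smul_eq_mul, RingHom.id_apply]
    simp_rw [mul_left_comm _ c]
    rw [← Finset.mul_sum, mul_div_assoc]; ring

lemma T0_apply (i : V) (y : V → ℝ) :
    T0 G i y = (∑ j, (if G.Adj i j then (1 : ℝ) else 0) * y j) / dR G i - y i := rfl

lemma F_zero_eq (δ : ℝ) {i : V} (hi : i ∉ Z) {j₀ : V} (hj₀ : G.Adj i j₀) (y : V → ℝ) :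
    F G Z 0 δ y i = T0 G i y := by
  have hd : dR G i ≠ 0 := ne_of_gt (dR_pos G hj₀)
  have hw : ∀ j, wt G 0 δ y i j = (if G.Adj i j then (1 : ℝ) else 0) / 2 := by
    intro j; unfold wt
    by_cases h : G.Adj i j
    · rw [if_pos h, if_pos h]
      norm_num [Real.exp_zero]
    · rw [if_neg h, if_neg h]
      norm_num
  rw [F, if_neg hi]
  have h1 : ∑ j, wt G 0 δ y i j = dR G i / 2 := by
    rw [dR, Finset.sum_div]; exact Finset.sum_congr rfl fun j _ => hw j
  have h2 : ∑ j, wt G 0 δ y i j * (y j - y i)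
      = ((∑ j, (if G.Adj i j then (1 : ℝ) else 0) * y j) - dR G i * y i) / 2 := by
    simp_rw [hw, div_mul_eq_mul_div, ← Finset.sum_div]
    congr 1
    rw [dR, Finset.sum_mul, ← Finset.sum_sub_distrib]
    exact Finset.sum_congr rfl fun j _ => by ring
  rw [h1, h2, T0_apply]
  field_simp

/-- The Jacobian of the `γ = 0` dynamics over the persuadable block. -/
noncomputable def Lmat : Matrix {v : V // v ∉ Z} {v : V // v ∉ Z} ℝ :=
  fun i j => (if G.Adj i.val j.val then (1 : ℝ) else 0) / dR G i.val
    - if i = j then 1 else 0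

lemma T0_single (i j : {v : V // v ∉ Z}) :
    T0 G i.val (Pi.single j.val (1 : ℝ)) = Lmat G Z i j := by
  rw [T0_apply, Lmat]
  congr 1
  · congr 1
    rw [Finset.sum_eq_single j.val]
    · simp
    · intro k _ hk; simp [Pi.single_apply, hk]
    · intro h; exact absurd (Finset.mem_univ _) h
  · rw [Pi.single_apply]
    by_cases h : i = j
    · subst h; simp
    · rw [if_neg h, if_neg (fun hh => h (Subtype.ext hh))]

/-- Dirichlet quadratic form of the zero-extension. -/
noncomputable def qf (φ : {v : V // v ∉ Z} → ℝ) : ℝ :=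
  ∑ i : V, ∑ j : V, (if G.Adj i j then (1 : ℝ) else 0) * (glin Z φ i - glin Z φ j) ^ 2

lemma qf_nonneg (φ : {v : V // v ∉ Z} → ℝ) : 0 ≤ qf G Z φ :=
  Finset.sum_nonneg fun i _ => Finset.sum_nonneg fun j _ => by positivity

lemma sum_ext_zero (f : V → ℝ) (hf : ∀ v ∈ Z, f v = 0) :
    ∑ i : {v : V // v ∉ Z}, f i.val = ∑ i : V, f i := by
  classical
  have h1 : ∑ i : {v : V // v ∉ Z}, f i.val = ∑ i ∈ Zᶜ, f i := by
    rw [← Finset.sum_subtype Zᶜ (fun x => Finset.mem_compl) f]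
  rw [h1]
  rw [← Finset.sum_compl_add_sum Z f, Finset.sum_eq_zero hf]
  ring

lemma qf_eq (φ : {v : V // v ∉ Z} → ℝ) :
    ∑ i : {v : V // v ∉ Z}, (dR G i.val * φ i ^ 2
        - φ i * ∑ j : V, (if G.Adj i.val j then (1 : ℝ) else 0) * glin Z φ j)
      = qf G Z φ / 2 := by
  classical
  set g := glin Z φ with hg
  set A : V → V → ℝ := fun i j => if G.Adj i j then (1 : ℝ) else 0 with hA
  have hgv : ∀ i : {v : V // v ∉ Z}, g i.val = φ i := fun i => glin_apply_not_mem Z φ i.2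
  -- extend to a sum over all of V
  have hzero : ∀ v ∈ Z, dR G v * g v ^ 2 - g v * ∑ j, A v j * g j = 0 := fun v hv => by
    rw [show g v = 0 from glin_apply_mem Z φ hv]; ring
  have hext : ∑ i : {v : V // v ∉ Z}, (dR G i.val * φ i ^ 2 - φ i * ∑ j, A i.val j * g j)
      = ∑ i : V, (dR G i * g i ^ 2 - g i * ∑ j, A i j * g j) := by
    rw [← sum_ext_zero Z (fun i => dR G i * g i ^ 2 - g i * ∑ j, A i j * g j) hzero]
    exact Finset.sum_congr rfl fun i _ => by simp only [hgv]
  rw [hext]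
  -- now a pure double-sum identity
  have e1 : ∑ i : V, (dR G i * g i ^ 2 - g i * ∑ j, A i j * g j)
      = (∑ i : V, ∑ j : V, A i j * g i ^ 2) - ∑ i : V, ∑ j : V, A i j * (g i * g j) := by
    rw [← Finset.sum_sub_distrib]
    refine Finset.sum_congr rfl fun i _ => ?_
    rw [dR, Finset.sum_mul, Finset.mul_sum, ← Finset.sum_sub_distrib,
      ← Finset.sum_sub_distrib]
    exact Finset.sum_congr rfl fun j _ => by simp only [hA]; ring
  have e2 : qf G Z φ = (∑ i : V, ∑ j : V, A i j * g i ^ 2)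
      - 2 * (∑ i : V, ∑ j : V, A i j * (g i * g j))
      + ∑ i : V, ∑ j : V, A i j * g j ^ 2 := by
    rw [qf]
    simp only [Finset.mul_sum, ← Finset.sum_sub_distrib, ← Finset.sum_add_distrib]
    refine Finset.sum_congr rfl fun i _ => Finset.sum_congr rfl fun j _ => by
      simp only [hA]; ring
  have e3 : ∑ i : V, ∑ j : V, A i j * g j ^ 2 = ∑ i : V, ∑ j : V, A i j * g i ^ 2 := by
    rw [Finset.sum_comm]
    refine Finset.sum_congr rfl fun i _ => Finset.sum_congr rfl fun j _ => ?_
    simp only [hA]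
    exact congrArg (· * g i ^ 2) (if_congr (G.adj_comm j i) rfl rfl)
  rw [e1, e2, e3]; ring

end Aux2

end SBCM
namespace SBCM

section Aux3

variable {V : Type*} [Fintype V] [DecidableEq V]
variable (G : SimpleGraph V) [DecidableRel G.Adj] (Z : Finset V)

lemma qf_pos (hconn : (G.induce {v : V | v ∉ Z}).Connected)
    {istar zstar : V} (histar : istar ∉ Z) (hz : zstar ∈ Z) (hadje : G.Adj istar zstar)
    (φ : {v : V // v ∉ Z} → ℝ) (hφ : φ ≠ 0) : 0 < qf G Z φ := by
  classical
  rcases lt_or_eq_of_le (qf_nonneg G Z φ) with h | h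
  · exact h
  exfalso
  apply hφ
  -- all edge differences vanish
  have hterm : ∀ i ∈ (Finset.univ : Finset V), ∀ j ∈ (Finset.univ : Finset V),
      (if G.Adj i j then (1 : ℝ) else 0) * (glin Z φ i - glin Z φ j) ^ 2 = 0 := by
    have h1 := (Finset.sum_eq_zero_iff_of_nonneg
      (fun i _ => Finset.sum_nonneg fun j _ => by positivity)).mp h.symm
    intro i hi j hj
    exact (Finset.sum_eq_zero_iff_of_nonneg (fun j _ => by positivity)).mp (h1 i hi) j hj
  have hE : ∀ i j : V, G.Adj i j → glin Z φ i = glin Z φ j := by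
    intro i j hadj
    have := hterm i (Finset.mem_univ i) j (Finset.mem_univ j)
    rw [if_pos hadj, one_mul] at this
    have := pow_eq_zero_iff (n := 2) (by norm_num) |>.mp this
    linarith [sub_eq_zero.mp this]
  have hstar : glin Z φ istar = 0 := by
    rw [hE istar zstar hadje, glin_apply_mem Z φ hz]
  have hreach : ∀ a b : {v : V | v ∉ Z}, (G.induce {v : V | v ∉ Z}).Reachable a b →
      glin Z φ a.val = glin Z φ b.val := by
    intro a b hr
    obtain ⟨w⟩ := hr
    induction w with
    | nil => rfl
    | cons hadjw w ih => exact (hE _ _ hadjw).trans ih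
  funext i
  have hm : (i.val : V) ∈ {v : V | v ∉ Z} := i.2
  have hm' : (istar : V) ∈ {v : V | v ∉ Z} := histar
  have h1 := hreach ⟨i.val, hm⟩ ⟨istar, hm'⟩ (hconn.preconnected _ _)
  rw [Pi.zero_apply, ← glin_apply_not_mem Z φ i.2]
  simpa [hstar] using h1

lemma qf_bound (hconn : (G.induce {v : V | v ∉ Z}).Connected)
    {istar zstar : V} (histar : istar ∉ Z) (hz : zstar ∈ Z) (hadje : G.Adj istar zstar) :
    ∃ m > (0 : ℝ), ∀ φ : {v : V // v ∉ Z} → ℝ, m * (∑ i, φ i ^ 2) ≤ qf G Z φ := by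
  classical
  haveI : Nonempty {v : V // v ∉ Z} := ⟨⟨istar, histar⟩⟩
  set S : Set ({v : V // v ∉ Z} → ℝ) := {φ | ∑ i, φ i ^ 2 = 1} with hS
  have hcont_sum : Continuous fun φ : {v : V // v ∉ Z} → ℝ => ∑ i, φ i ^ 2 :=
    continuous_finset_sum _ fun i _ => (continuous_apply i).pow 2
  have hclosed : IsClosed S := isClosed_eq hcont_sum continuous_const
  have hbdd : Bornology.IsBounded S := by
    apply Bornology.IsBounded.subset (Metric.isBounded_closedBall (x := 0) (r := 1))
    intro φ hφ
    rw [Metric.mem_closedBall, dist_zero_right]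
    rw [pi_norm_le_iff_of_nonneg zero_le_one]
    intro i
    rw [Real.norm_eq_abs]
    have h1 : φ i ^ 2 ≤ 1 := by
      rw [hS, Set.mem_setOf_eq] at hφ
      rw [← hφ]
      exact Finset.single_le_sum (fun j _ => sq_nonneg (φ j)) (Finset.mem_univ i)
    nlinarith [abs_nonneg (φ i), sq_abs (φ i)]
  have hcompact : IsCompact S := Metric.isCompact_of_isClosed_isBounded hclosed hbdd
  have hcont_qf : Continuous fun φ : {v : V // v ∉ Z} → ℝ => qf G Z φ := by
    apply continuous_finset_sum _ fun i _ => continuous_finset_sum _ fun j _ => ?_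
    have hg : ∀ v : V, Continuous fun φ : {v : V // v ∉ Z} → ℝ => glin Z φ v := by
      intro v
      exact (LinearMap.continuous_of_finiteDimensional
        ((LinearMap.proj v).comp (glin Z (V := V))))
    exact continuous_const.mul (((hg i).sub (hg j)).pow 2)
  have hne : S.Nonempty := by
    obtain ⟨i0⟩ := (inferInstance : Nonempty {v : V // v ∉ Z})
    refine ⟨Pi.single i0 1, ?_⟩
    simp only [hS, Set.mem_setOf_eq]
    rw [Finset.sum_eq_single i0]
    · simp
    · intro k _ hk; simp [Pi.single_apply, hk]
    · intro hk; exact absurd (Finset.mem_univ _) hk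
  obtain ⟨φ0, hφ0S, hmin⟩ := hcompact.exists_isMinOn hne hcont_qf.continuousOn
  have hφ0ne : φ0 ≠ 0 := by
    intro h0
    rw [hS] at hφ0S
    simp only [Set.mem_setOf_eq, h0] at hφ0S
    simp at hφ0S
  refine ⟨qf G Z φ0, qf_pos G Z hconn histar hz hadje φ0 hφ0ne, ?_⟩
  intro φ
  by_cases hφ : φ = 0
  · subst hφ
    have : qf G Z (0 : {v : V // v ∉ Z} → ℝ) = 0 := by
      apply Finset.sum_eq_zero; intro i _; apply Finset.sum_eq_zero; intro j _
      simp [glin]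
    simp [this]
  · -- scale φ to the sphere
    set s : ℝ := ∑ i, φ i ^ 2 with hs
    have hspos : 0 < s := by
      apply Finset.sum_pos' (fun i _ => sq_nonneg _)
      obtain ⟨i, hi⟩ := Function.ne_iff.mp hφ
      exact ⟨i, Finset.mem_univ _, by rw [pow_two]; exact mul_self_pos.mpr hi⟩
    set c : ℝ := (Real.sqrt s)⁻¹ with hc
    have hc2 : c ^ 2 = s⁻¹ := by
      rw [hc, inv_pow, Real.sq_sqrt hspos.le]
    have hmem : c • φ ∈ S := by
      simp only [hS, Set.mem_setOf_eq, Pi.smul_apply, smul_eq_mul]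
      have : ∀ i, (c * φ i) ^ 2 = c ^ 2 * φ i ^ 2 := fun i => by ring
      simp_rw [this]
      rw [← Finset.mul_sum, hc2, ← hs, inv_mul_cancel₀ (ne_of_gt hspos)]
    have hscale : qf G Z (c • φ) = c ^ 2 * qf G Z φ := by
      rw [qf, qf, Finset.mul_sum]
      refine Finset.sum_congr rfl fun i _ => ?_
      rw [Finset.mul_sum]
      refine Finset.sum_congr rfl fun j _ => ?_
      rw [map_smul]
      simp only [Pi.smul_apply, smul_eq_mul]
      ring
    have hmin' := isMinOn_iff.mp hmin (c • φ) hmem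
    rw [hscale] at hmin'
    -- qf φ0 ≤ c^2 * qf φ  ⇒ qf φ0 * s ≤ qf φ
    have hfin : qf G Z φ0 * s ≤ qf G Z φ := by
      have h2 : qf G Z φ0 ≤ s⁻¹ * qf G Z φ := by rwa [hc2] at hmin'
      calc qf G Z φ0 * s ≤ (s⁻¹ * qf G Z φ) * s := by
            exact mul_le_mul_of_nonneg_right h2 hspos.le
        _ = qf G Z φ := by field_simp
    linarith [hfin]

end Aux3

end SBCM
namespace SBCM

section Aux4

variable {V : Type*} [Fintype V] [DecidableEq V]
variable (G : SimpleGraph V) [DecidableRel G.Adj] (Z : Finset V)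

lemma dR_nonneg (i : V) : 0 ≤ dR G i :=
  Finset.sum_nonneg fun j _ => by positivity

lemma sum_A_glin (φ : {v : V // v ∉ Z} → ℝ) (i : V) :
    ∑ j : V, (if G.Adj i j then (1 : ℝ) else 0) * glin Z φ j
      = ∑ j : {v : V // v ∉ Z}, (if G.Adj i j.val then (1 : ℝ) else 0) * φ j := by
  rw [← sum_ext_zero Z (fun j => (if G.Adj i j then (1 : ℝ) else 0) * glin Z φ j)
    (fun v hv => by simp [glin_apply_mem Z φ hv])]
  exact Finset.sum_congr rfl fun j _ => by rw [glin_apply_not_mem Z φ j.2]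

lemma B_eq (hnbr : ∀ i : V, i ∉ Z → ∃ j, G.Adj i j) (φ : {v : V // v ∉ Z} → ℝ) :
    ∑ i, dR G i.val * φ i * ((Lmat G Z).mulVec φ) i = -(qf G Z φ / 2) := by
  classical
  rw [← qf_eq G Z φ, ← Finset.sum_neg_distrib]
  refine Finset.sum_congr rfl fun i _ => ?_
  obtain ⟨j₀, hj₀⟩ := hnbr i.val i.2
  have hd : dR G i.val ≠ 0 := ne_of_gt (dR_pos G hj₀)
  rw [Matrix.mulVec, dotProduct]
  simp only [Lmat]
  rw [sum_A_glin G Z φ i.val]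
  have hexp : ∑ j : {v : V // v ∉ Z},
      ((if G.Adj i.val j.val then (1 : ℝ) else 0) / dR G i.val - if i = j then 1 else 0) * φ j
      = (∑ j : {v : V // v ∉ Z}, (if G.Adj i.val j.val then (1 : ℝ) else 0) * φ j) / dR G i.val
        - φ i := by
    have hL : ∑ j : {v : V // v ∉ Z},
        ((if G.Adj i.val j.val then (1 : ℝ) else 0) / dR G i.val - if i = j then 1 else 0) * φ j
        = (∑ j : {v : V // v ∉ Z},
            (if G.Adj i.val j.val then (1 : ℝ) else 0) * φ j / dR G i.val)
          - ∑ j : {v : V // v ∉ Z}, (if i = j then (1 : ℝ) else 0) * φ j := by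
      rw [← Finset.sum_sub_distrib]
      exact Finset.sum_congr rfl fun j _ => by ring
    rw [hL, ← Finset.sum_div]
    congr 1
    have h6 : ∀ j : {v : V // v ∉ Z}, (if i = j then (1 : ℝ) else 0) * φ j
        = if i = j then φ j else 0 := fun j => by split <;> ring
    simp_rw [h6]
    rw [Finset.sum_ite_eq]
    simp
  rw [hexp]
  field_simp
  ring

lemma linStable_of_close (hconn : (G.induce {v : V | v ∉ Z}).Connected)
    {istar zstar : V} (histar : istar ∉ Z) (hz : zstar ∈ Z) (hadje : G.Adj istar zstar)
    (hnbr : ∀ i : V, i ∉ Z → ∃ j, G.Adj i j) :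
    ∃ η > (0 : ℝ), ∀ M : Matrix {v : V // v ∉ Z} {v : V // v ∉ Z} ℝ,
      (∀ i j, |M i j - Lmat G Z i j| ≤ η) → LinStable M := by
  classical
  obtain ⟨m, hm, hqb⟩ := qf_bound G Z hconn histar hz hadje
  set CV : ℝ := (Fintype.card V : ℝ) with hCV
  set N : ℝ := (Fintype.card {v : V // v ∉ Z} : ℝ) with hN
  have hCV0 : 0 ≤ CV := by positivity
  have hN0 : 0 ≤ N := by positivity
  refine ⟨m / (2 * (CV * N + 1)), by positivity, ?_⟩
  intro M hclose μ ⟨φ, hφne, heig⟩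
  set η : ℝ := m / (2 * (CV * N + 1)) with hη
  set s : ℝ := ∑ i, φ i ^ 2 with hs
  have hspos : 0 < s := by
    apply Finset.sum_pos' (fun i _ => sq_nonneg _)
    obtain ⟨i, hi⟩ := Function.ne_iff.mp hφne
    exact ⟨i, Finset.mem_univ _, by rw [pow_two]; exact mul_self_pos.mpr hi⟩
  set Sd : ℝ := ∑ i, dR G i.val * φ i ^ 2 with hSd
  have hSdpos : 0 < Sd := by
    apply Finset.sum_pos' (fun i _ => mul_nonneg (dR_nonneg G i.val) (sq_nonneg _))
    obtain ⟨i, hi⟩ := Function.ne_iff.mp hφne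
    obtain ⟨j₀, hj₀⟩ := hnbr i.val i.2
    refine ⟨i, Finset.mem_univ _, ?_⟩
    have h1 : 0 < φ i ^ 2 := by rw [pow_two]; exact mul_self_pos.mpr hi
    exact mul_pos (dR_pos G hj₀) h1
  -- the weighted Rayleigh quotient identity
  have hA1 : ∑ i, dR G i.val * φ i * (M.mulVec φ i) = μ * Sd := by
    have : ∀ i, M.mulVec φ i = μ * φ i := fun i => by
      rw [heig]; simp
    simp_rw [this]
    rw [hSd, Finset.mul_sum]
    exact Finset.sum_congr rfl fun i _ => by ring
  have hsplit : ∑ i, dR G i.val * φ i * (M.mulVec φ i)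
      = (∑ i, dR G i.val * φ i * ((Lmat G Z).mulVec φ) i)
        + ∑ i, dR G i.val * φ i * (∑ j, (M i j - Lmat G Z i j) * φ j) := by
    rw [← Finset.sum_add_distrib]
    refine Finset.sum_congr rfl fun i _ => ?_
    rw [Matrix.mulVec, Matrix.mulVec, dotProduct, dotProduct]
    rw [Finset.mul_sum, Finset.mul_sum, Finset.mul_sum, ← Finset.sum_add_distrib]
    exact Finset.sum_congr rfl fun j _ => by ring
  have hBle : (∑ i, dR G i.val * φ i * ((Lmat G Z).mulVec φ) i) ≤ -(m * s / 2) := by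
    rw [B_eq G Z hnbr φ]
    have := hqb φ
    rw [← hs] at this
    linarith
  have hErr : |∑ i, dR G i.val * φ i * (∑ j, (M i j - Lmat G Z i j) * φ j)|
      ≤ CV * η * (N * s) := by
    calc |∑ i, dR G i.val * φ i * (∑ j, (M i j - Lmat G Z i j) * φ j)|
        ≤ ∑ i, |dR G i.val * φ i * (∑ j, (M i j - Lmat G Z i j) * φ j)| :=
          Finset.abs_sum_le_sum_abs _ _
      _ ≤ ∑ i, CV * |φ i| * (η * ∑ j, |φ j|) := by
          refine Finset.sum_le_sum fun i _ => ?_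
          rw [abs_mul, abs_mul]
          have h1 : |dR G i.val| ≤ CV := by
            rw [abs_of_nonneg (dR_nonneg G i.val)]; exact dR_le_card G i.val
          have h2 : |∑ j, (M i j - Lmat G Z i j) * φ j| ≤ η * ∑ j, |φ j| := by
            calc |∑ j, (M i j - Lmat G Z i j) * φ j|
                ≤ ∑ j, |(M i j - Lmat G Z i j) * φ j| := Finset.abs_sum_le_sum_abs _ _
              _ ≤ ∑ j, η * |φ j| := by
                  refine Finset.sum_le_sum fun j _ => ?_
                  rw [abs_mul]
                  exact mul_le_mul_of_nonneg_right (hclose i j) (abs_nonneg _)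
              _ = η * ∑ j, |φ j| := by rw [Finset.mul_sum]
          have h3 : (0:ℝ) ≤ |φ i| := abs_nonneg _
          have h4 : (0:ℝ) ≤ |∑ j, (M i j - Lmat G Z i j) * φ j| := abs_nonneg _
          have h5 : (0:ℝ) ≤ η * ∑ j, |φ j| :=
            le_trans h4 h2
          exact mul_le_mul (mul_le_mul h1 le_rfl h3 hCV0) h2 h4
            (mul_nonneg hCV0 h3)
      _ = CV * η * (∑ i, |φ i|) * (∑ j, |φ j|) := by
          have h7 : ∀ i : {v : V // v ∉ Z}, CV * |φ i| * (η * ∑ j, |φ j|)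
              = (CV * η * (∑ j, |φ j|)) * |φ i| := fun i => by ring
          simp_rw [h7]
          rw [← Finset.mul_sum]
      _ ≤ CV * η * (N * s) := by
          have hcs : (∑ i, |φ i|) ^ 2 ≤ N * s := by
            have := sq_sum_le_card_mul_sum_sq (s := (Finset.univ : Finset {v : V // v ∉ Z}))
              (f := fun i => |φ i|)
            simp only [sq_abs] at this
            rw [hN, hs]
            simpa using this
          have hsum_abs : (0:ℝ) ≤ ∑ i, |φ i| := Finset.sum_nonneg fun i _ => abs_nonneg _
          have hηpos : 0 < η := by rw [hη]; positivity
          calc CV * η * (∑ i, |φ i|) * (∑ j, |φ j|)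
              = CV * η * ((∑ i, |φ i|) ^ 2) := by ring
            _ ≤ CV * η * (N * s) := by
                exact mul_le_mul_of_nonneg_left hcs (by positivity)
  -- combine
  have hcomb : μ * Sd ≤ -(m * s / 2) + CV * η * (N * s) := by
    rw [← hA1, hsplit]
    have := (abs_le.mp hErr).2
    linarith
  have hkey : -(m * s / 2) + CV * η * (N * s) < 0 := by
    have h1 : CV * η * (N * s) = m * s * (CV * N) / (2 * (CV * N + 1)) := by
      rw [hη]; field_simp
    have h2 : m * s * (CV * N) / (2 * (CV * N + 1)) < m * s / 2 := by
      rw [div_lt_div_iff₀ (by positivity) (by norm_num)]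
      nlinarith [mul_pos hm hspos, hCV0, hN0]
    rw [h1]
    linarith
  have : μ * Sd < 0 := lt_of_le_of_lt hcomb hkey
  nlinarith [hSdpos]

end Aux4

end SBCM
namespace SBCM

section Aux5

variable {V : Type*} [Fintype V] [DecidableEq V]
variable (G : SimpleGraph V) [DecidableRel G.Adj] (Z : Finset V)

/-- zero-extension as a continuous linear map -/
noncomputable def GlC : ({v : V // v ∉ Z} → ℝ) →L[ℝ] (V → ℝ) :=
  LinearMap.toContinuousLinearMap (glin Z)

lemma GlC_apply (p : {v : V // v ∉ Z} → ℝ) : GlC Z p = glin Z p := rfl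

lemma contDiff_glue (xbar : V → ℝ) :
    ContDiff ℝ 2 (fun p : {v : V // v ∉ Z} → ℝ => glue Z xbar p) := by
  have heq : (fun p : {v : V // v ∉ Z} → ℝ => glue Z xbar p)
      = fun p => GlC Z p + fun v => if v ∉ Z then 0 else xbar v :=
    funext fun p => glue_eq Z xbar p
  rw [heq]
  exact (GlC Z).contDiff.add contDiff_const

/-- row `i` of the `γ = 0` linearization as a continuous linear map -/
noncomputable def T0C (i : V) : (V → ℝ) →L[ℝ] ℝ :=
  LinearMap.toContinuousLinearMap (T0 G i)

lemma T0C_apply (i : V) (y : V → ℝ) : T0C G i y = T0 G i y := rfl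

lemma fderiv_F_zero (δ : ℝ) {i : V} (hi : i ∉ Z) {j₀ : V} (hj₀ : G.Adj i j₀) (x : V → ℝ) :
    fderiv ℝ (fun y : V → ℝ => F G Z 0 δ y i) x = T0C G i := by
  have heq : (fun y : V → ℝ => F G Z 0 δ y i) = fun y => T0C G i y :=
    funext fun y => F_zero_eq G Z δ hi hj₀ y
  rw [heq]
  exact (T0C G i).fderiv

lemma Jp_zero (δ : ℝ) (hnbr : ∀ i : V, i ∉ Z → ∃ j, G.Adj i j) (x : V → ℝ) :
    Jp G Z 0 δ x = Lmat G Z := by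
  funext i j
  obtain ⟨j₀, hj₀⟩ := hnbr i.val i.2
  show fderiv ℝ (fun y : V → ℝ => F G Z 0 δ y i.val) x (Pi.single (j : V) (1 : ℝ)) = _
  rw [fderiv_F_zero G Z δ i.2 hj₀ x]
  rw [T0C_apply]
  exact T0_single G Z i j

lemma Jp_eq_full (δ γ : ℝ) {i : V} (hi : i ∉ Z) {j₀ : V} (hj₀ : G.Adj i j₀) (x : V → ℝ)
    (v : V → ℝ) :
    fderiv ℝ (fun y : V → ℝ => F G Z γ δ y i) x v
      = fderiv ℝ (fun q : ℝ × (V → ℝ) => F G Z q.1 δ q.2 i) (γ, x) ((0 : ℝ), v) := by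
  have hdiff : DifferentiableAt ℝ (fun q : ℝ × (V → ℝ) => F G Z q.1 δ q.2 i) (γ, x) :=
    ((contDiff_F G Z δ hi hj₀).differentiable (by norm_num)) (γ, x)
  have h1 : HasFDerivAt (fun y : V → ℝ => ((γ, y) : ℝ × (V → ℝ)))
      (ContinuousLinearMap.inr ℝ ℝ (V → ℝ)) x := hasFDerivAt_prodMk_right γ x
  have h2 : HasFDerivAt (fun y : V → ℝ => F G Z γ δ y i)
      ((fderiv ℝ (fun q : ℝ × (V → ℝ) => F G Z q.1 δ q.2 i) (γ, x)).comp
        (ContinuousLinearMap.inr ℝ ℝ (V → ℝ))) x :=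
    (hdiff.hasFDerivAt).comp x h1
  rw [h2.fderiv]
  rfl

/-- `F ∘ glue` as a function of `(γ, p)`. -/
noncomputable def Phi (δ : ℝ) (xbar : V → ℝ) :
    ℝ × ({v : V // v ∉ Z} → ℝ) → ({v : V // v ∉ Z} → ℝ) :=
  fun q i => F G Z q.1 δ (glue Z xbar q.2) i.val

set_option maxHeartbeats 1000000 in
lemma contDiff_Phi (δ : ℝ) (xbar : V → ℝ) (hnbr : ∀ i : V, i ∉ Z → ∃ j, G.Adj i j) :
    ContDiff ℝ 2 (Phi G Z δ xbar) := by
  rw [contDiff_pi]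
  intro i
  obtain ⟨j₀, hj₀⟩ := hnbr i.val i.2
  have h1 : ContDiff ℝ 2
      (fun q : ℝ × ({v : V // v ∉ Z} → ℝ) => ((q.1, glue Z xbar q.2) : ℝ × (V → ℝ))) :=
    contDiff_fst.prodMk ((contDiff_glue Z xbar).comp contDiff_snd)
  have h2 := (contDiff_F G Z δ i.2 hj₀).comp h1
  exact h2

/-- The linear part of `p ↦ Phi (0, p)`. -/
noncomputable def Lop : ({v : V // v ∉ Z} → ℝ) →L[ℝ] ({v : V // v ∉ Z} → ℝ) :=
  ContinuousLinearMap.pi (fun i => (T0C G i.val).comp (GlC Z))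

lemma Lop_apply (p : {v : V // v ∉ Z} → ℝ) (i : {v : V // v ∉ Z}) :
    Lop G Z p i = T0 G i.val (glin Z p) := rfl

lemma Phi_zero_eq (δ : ℝ) (xbar : V → ℝ) (hnbr : ∀ i : V, i ∉ Z → ∃ j, G.Adj i j)
    (p : {v : V // v ∉ Z} → ℝ) :
    Phi G Z δ xbar (0, p)
      = Lop G Z p + fun i => T0 G i.val (fun v => if v ∉ Z then 0 else xbar v) := by
  funext i
  obtain ⟨j₀, hj₀⟩ := hnbr i.val i.2
  show F G Z 0 δ (glue Z xbar p) i.val = _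
  rw [F_zero_eq G Z δ i.2 hj₀, glue_eq Z xbar p, map_add]
  rfl

lemma Lop_ker (hconn : (G.induce {v : V | v ∉ Z}).Connected)
    {istar zstar : V} (histar : istar ∉ Z) (hz : zstar ∈ Z) (hadje : G.Adj istar zstar)
    (hnbr : ∀ i : V, i ∉ Z → ∃ j, G.Adj i j)
    (p : {v : V // v ∉ Z} → ℝ) (hp : Lop G Z p = 0) : p = 0 := by
  classical
  by_contra hne
  have hq := qf_pos G Z hconn histar hz hadje p hne
  have hzero : qf G Z p / 2 = 0 := by
    rw [← qf_eq G Z p]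
    apply Finset.sum_eq_zero
    intro i _
    obtain ⟨j₀, hj₀⟩ := hnbr i.val i.2
    have hd : dR G i.val ≠ 0 := ne_of_gt (dR_pos G hj₀)
    have h1 : T0 G i.val (glin Z p) = 0 := by
      have := congrFun hp i
      rwa [Lop_apply] at this
    rw [T0_apply] at h1
    rw [glin_apply_not_mem Z p i.2] at h1
    -- h1 : (∑ j, A * glin p j) / d - p i = 0
    have h3 : (∑ j, (if G.Adj i.val j then (1 : ℝ) else 0) * glin Z p j) / dR G i.val
        = p i := sub_eq_zero.mp h1
    rw [div_eq_iff hd] at h3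
    rw [h3]
    ring
  linarith

end Aux5

end SBCM

open Topology Filter Metric

set_option maxHeartbeats 2000000 in

/-- If `𝒢` has at least one zealot, the persuadable subgraph is connected,
and some persuadable node is adjacent to a zealot, then around the harmonic state
(the unique steady state of `F₀`) there is a unique `C¹` branch `h : [0, ε) → U` of
steady states of `F_γ`, each of which is the unique steady state with persuadable part
in `U`, and each of which is linearly stable. -/
theorem stmt_3 {V : Type*} [Fintype V] [DecidableEq V]
    (G : SimpleGraph V) [DecidableRel G.Adj] (Z : Finset V)
    (hZ : Z.Nonempty)
    (hconn : (G.induce {v : V | v ∉ Z}).Connected)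
    (hnbr : ∀ i : V, i ∉ Z → ∃ j, G.Adj i j)
    (hadj : ∃ i z : V, i ∉ Z ∧ z ∈ Z ∧ G.Adj i z)
    (δ : ℝ) (hδ : 0 ≤ δ)
    (xbar : V → ℝ) (hharm : ∀ i, SBCM.F G Z 0 δ xbar i = 0) :
    ∃ ε > (0 : ℝ), ∃ U : Set ({v : V // v ∉ Z} → ℝ), IsOpen U ∧
      (fun v : {v : V // v ∉ Z} => xbar v.val) ∈ U ∧
      ∃ h : ℝ → ({v : V // v ∉ Z} → ℝ),
        (ContDiffOn ℝ 1 h (Set.Ico 0 ε) ∧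
          h 0 = (fun v : {v : V // v ∉ Z} => xbar v.val) ∧
          ∀ γ ∈ Set.Ico (0 : ℝ) ε,
            h γ ∈ U ∧
            (∀ i, SBCM.F G Z γ δ (SBCM.glue Z xbar (h γ)) i = 0) ∧
            (∀ p ∈ U, (∀ i, SBCM.F G Z γ δ (SBCM.glue Z xbar p) i = 0) → p = h γ) ∧
            SBCM.LinStable (SBCM.Jp G Z γ δ (SBCM.glue Z xbar (h γ)))) ∧
        (∀ h' : ℝ → ({v : V // v ∉ Z} → ℝ),
          (ContDiffOn ℝ 1 h' (Set.Ico 0 ε) ∧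
            h' 0 = (fun v : {v : V // v ∉ Z} => xbar v.val) ∧
            ∀ γ ∈ Set.Ico (0 : ℝ) ε,
              h' γ ∈ U ∧
              (∀ i, SBCM.F G Z γ δ (SBCM.glue Z xbar (h' γ)) i = 0) ∧
              (∀ p ∈ U, (∀ i, SBCM.F G Z γ δ (SBCM.glue Z xbar p) i = 0) → p = h' γ) ∧
              SBCM.LinStable (SBCM.Jp G Z γ δ (SBCM.glue Z xbar (h' γ)))) →
          Set.EqOn h' h (Set.Ico 0 ε)) := by
  classical
  open SBCM in
  obtain ⟨i0, z0, hi0, hz0, hadj0⟩ := hadj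
  -- abbreviations
  set p0 : {v : V // v ∉ Z} → ℝ := fun v => xbar v.val with hp0
  set e0 : ℝ × ({v : V // v ∉ Z} → ℝ) := (0, p0) with he0
  have hΦsm : ContDiff ℝ 2 (Phi G Z δ xbar) := contDiff_Phi G Z δ xbar hnbr
  set Ψ : ℝ × ({v : V // v ∉ Z} → ℝ) → ℝ × ({v : V // v ∉ Z} → ℝ) :=
    fun q => (q.1, Phi G Z δ xbar q) with hΨdef
  have hΨsm : ContDiff ℝ 2 Ψ := contDiff_fst.prodMk hΦsm
  have hglue0 : glue Z xbar p0 = xbar := glue_self Z xbar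
  have hΦ0 : Phi G Z δ xbar e0 = 0 := by
    funext i
    show F G Z (0:ℝ) δ (glue Z xbar p0) i.val = 0
    rw [hglue0]
    exact hharm i.val
  have hΨ0 : Ψ e0 = ((0 : ℝ), (0 : {v : V // v ∉ Z} → ℝ)) := by
    rw [hΨdef]
    simp only [hΦ0]
    rfl
  -- the derivative of Ψ at e0
  have hΦdiff : DifferentiableAt ℝ (Phi G Z δ xbar) e0 :=
    (hΦsm.differentiable (by norm_num)) e0
  set S := fderiv ℝ (Phi G Z δ xbar) e0 with hSdef
  have hS0 : ∀ v : {v : V // v ∉ Z} → ℝ, S (0, v) = Lop G Z v := by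
    have h1 : HasFDerivAt (fun p : {v : V // v ∉ Z} → ℝ => Phi G Z δ xbar (0, p))
        (S.comp (ContinuousLinearMap.inr ℝ ℝ ({v : V // v ∉ Z} → ℝ))) p0 :=
      (hΦdiff.hasFDerivAt).comp p0 (hasFDerivAt_prodMk_right 0 p0)
    have h2 : HasFDerivAt (fun p : {v : V // v ∉ Z} → ℝ => Phi G Z δ xbar (0, p))
        (Lop G Z) p0 := by
      have heq : (fun p : {v : V // v ∉ Z} → ℝ => Phi G Z δ xbar (0, p))
          = fun p => Lop G Z p + fun i => T0 G i.val (fun v => if v ∉ Z then 0 else xbar v) :=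
        funext fun p => Phi_zero_eq G Z δ xbar hnbr p
      rw [heq]
      exact (Lop G Z).hasFDerivAt.add_const _
    have h3 := h1.unique h2
    intro v
    have := congrArg (fun (T : _ →L[ℝ] _) => T v) h3
    exact this
  set T : (ℝ × ({v : V // v ∉ Z} → ℝ)) →L[ℝ] (ℝ × ({v : V // v ∉ Z} → ℝ)) :=
    (ContinuousLinearMap.fst ℝ ℝ ({v : V // v ∉ Z} → ℝ)).prod S with hTdef
  have hTΨ : HasFDerivAt Ψ T e0 := HasFDerivAt.prodMk hasFDerivAt_fst (hΦdiff.hasFDerivAt)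
  have hTinj : Function.Injective T := by
    have hker : ∀ q : ℝ × ({v : V // v ∉ Z} → ℝ), T q = 0 → q = 0 := by
      intro q hq
      have h1 : q.1 = 0 := congrArg Prod.fst hq
      have h2 : S q = 0 := congrArg Prod.snd hq
      have h3 : q = ((0 : ℝ), q.2) := by rw [← h1]
      rw [h3] at h2
      rw [hS0 q.2] at h2
      have h4 : q.2 = 0 := Lop_ker G Z hconn hi0 hz0 hadj0 hnbr q.2 h2
      rw [h3, h4]
      rfl
    intro a b hab
    have := hker (a - b) (by rw [map_sub, hab, sub_self])
    exact sub_eq_zero.mp this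
  have hTbij : Function.Bijective T :=
    ⟨hTinj, LinearMap.injective_iff_surjective.mp hTinj⟩
  set eT := LinearEquiv.toContinuousLinearEquiv
    (LinearEquiv.ofBijective
      (T : (ℝ × ({v : V // v ∉ Z} → ℝ)) →ₗ[ℝ] (ℝ × ({v : V // v ∉ Z} → ℝ))) hTbij) with heTdef
  have heT : (eT : (ℝ × ({v : V // v ∉ Z} → ℝ)) →L[ℝ] (ℝ × ({v : V // v ∉ Z} → ℝ))) = T :=
    ContinuousLinearMap.ext fun q => rfl
  have hTΨ' : HasFDerivAt Ψ
      (eT : (ℝ × ({v : V // v ∉ Z} → ℝ)) →L[ℝ] (ℝ × ({v : V // v ∉ Z} → ℝ))) e0 := by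
    rw [heT]; exact hTΨ
  have hstrict : HasStrictFDerivAt Ψ
      (eT : (ℝ × ({v : V // v ∉ Z} → ℝ)) →L[ℝ] (ℝ × ({v : V // v ∉ Z} → ℝ))) e0 :=
    hΨsm.contDiffAt.hasStrictFDerivAt' hTΨ' (by norm_num)
  -- inverse function theorem
  set ph := hstrict.toOpenPartialHomeomorph Ψ with hphdef
  have hsource : e0 ∈ ph.source := hstrict.mem_toOpenPartialHomeomorph_source
  set g := hstrict.localInverse Ψ eT e0 with hgdef
  have hg0 : g (Ψ e0) = e0 := hstrict.localInverse_apply_image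
  have hright : ∀ᶠ y in 𝓝 (Ψ e0), Ψ (g y) = y := hstrict.eventually_right_inverse
  have hgC : ContDiffAt ℝ 2 g (Ψ e0) :=
    hΨsm.contDiffAt.to_localInverse hTΨ' (by norm_num)
  rw [hΨ0] at hg0 hright hgC
  -- C¹ neighborhood of the inverse function
  obtain ⟨u, hu_mem, hgCu⟩ := hgC.contDiffOn (by norm_num : (1 : WithTop ℕ∞) ≤ 2)
    (by intro h; exact absurd h (by norm_num))
  have hboth : u ∩ {y | Ψ (g y) = y} ∈
      𝓝 (((0 : ℝ), (0 : {v : V // v ∉ Z} → ℝ))) := Filter.inter_mem hu_mem hright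
  obtain ⟨r1, hr1pos, hball1⟩ := Metric.mem_nhds_iff.mp hboth
  -- stability estimate
  obtain ⟨η, hηpos, hηstab⟩ := linStable_of_close G Z hconn hi0 hz0 hadj0 hnbr
  -- closeness of the Jacobian entries near e0
  have hJclose : ∀ᶠ e : ℝ × ({v : V // v ∉ Z} → ℝ) in 𝓝 e0,
      ∀ i j : {v : V // v ∉ Z}, |Jp G Z e.1 δ (glue Z xbar e.2) i j - Lmat G Z i j| ≤ η := by
    refine Filter.eventually_all.mpr fun i => Filter.eventually_all.mpr fun j => ?_
    obtain ⟨j₀, hj₀⟩ := hnbr i.val i.2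
    have hEq : ∀ e : ℝ × ({v : V // v ∉ Z} → ℝ),
        Jp G Z e.1 δ (glue Z xbar e.2) i j
          = fderiv ℝ (fun q : ℝ × (V → ℝ) => F G Z q.1 δ q.2 i.val)
              (e.1, glue Z xbar e.2) ((0 : ℝ), Pi.single (j : V) (1 : ℝ)) :=
      fun e => Jp_eq_full G Z δ e.1 i.2 hj₀ (glue Z xbar e.2) (Pi.single (j : V) (1 : ℝ))
    have hcont : Continuous (fun e : ℝ × ({v : V // v ∉ Z} → ℝ) =>
        fderiv ℝ (fun q : ℝ × (V → ℝ) => F G Z q.1 δ q.2 i.val)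
          (e.1, glue Z xbar e.2) ((0 : ℝ), Pi.single (j : V) (1 : ℝ))) := by
      apply Continuous.clm_apply ?_ continuous_const
      exact ((contDiff_F G Z δ i.2 hj₀).continuous_fderiv (by norm_num)).comp
        (continuous_fst.prodMk ((contDiff_glue Z xbar).continuous.comp continuous_snd))
    have hfun_eq : (fun e : ℝ × ({v : V // v ∉ Z} → ℝ) =>
        Jp G Z e.1 δ (glue Z xbar e.2) i j)
        = fun e => fderiv ℝ (fun q : ℝ × (V → ℝ) => F G Z q.1 δ q.2 i.val)
            (e.1, glue Z xbar e.2) ((0 : ℝ), Pi.single (j : V) (1 : ℝ)) := funext hEq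
    have hval : Jp G Z (e0.1) δ (glue Z xbar e0.2) i j = Lmat G Z i j := by
      show Jp G Z 0 δ (glue Z xbar p0) i j = Lmat G Z i j
      rw [Jp_zero G Z δ hnbr]
    have htend : Filter.Tendsto (fun e : ℝ × ({v : V // v ∉ Z} → ℝ) =>
        Jp G Z e.1 δ (glue Z xbar e.2) i j) (𝓝 e0) (𝓝 (Lmat G Z i j)) := by
      rw [hfun_eq, ← hval, hEq e0]
      exact hcont.continuousAt
    have := (Metric.tendsto_nhds.mp htend) η hηpos
    filter_upwards [this] with e he
    rw [Real.dist_eq] at he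
    exact le_of_lt he
  obtain ⟨ρ, hρpos, hball2⟩ := Metric.mem_nhds_iff.mp
    (Filter.inter_mem (ph.open_source.mem_nhds hsource) hJclose)
  -- the inverse function lands in the ρ-ball
  have hgc : Filter.Tendsto g (𝓝 ((0 : ℝ), (0 : {v : V // v ∉ Z} → ℝ))) (𝓝 e0) := by
    have h1 : Filter.Tendsto g (𝓝 ((0 : ℝ), (0 : {v : V // v ∉ Z} → ℝ)))
        (𝓝 (g ((0 : ℝ), (0 : {v : V // v ∉ Z} → ℝ)))) := hgC.continuousAt
    rwa [hg0] at h1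
  have hginball : ∀ᶠ y in 𝓝 (((0 : ℝ), (0 : {v : V // v ∉ Z} → ℝ))),
      g y ∈ Metric.ball e0 ρ := hgc (Metric.ball_mem_nhds _ hρpos)
  obtain ⟨r2, hr2pos, hball3⟩ := Metric.mem_nhds_iff.mp hginball
  -- choose ε
  set ε := min r1 (min r2 ρ) with hεdef
  have hεpos : 0 < ε := lt_min hr1pos (lt_min hr2pos hρpos)
  have hεr1 : ε ≤ r1 := min_le_left _ _
  have hεr2 : ε ≤ r2 := le_trans (min_le_right _ _) (min_le_left _ _)
  have hερ : ε ≤ ρ := le_trans (min_le_right _ _) (min_le_right _ _)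
  set hfun : ℝ → ({v : V // v ∉ Z} → ℝ) := fun γ => (g (γ, 0)).2 with hfundef
  have hdistγ : ∀ γ : ℝ, 0 ≤ γ →
      dist ((γ, (0 : {v : V // v ∉ Z} → ℝ))) (((0 : ℝ), (0 : {v : V // v ∉ Z} → ℝ))) = γ := by
    intro γ hγ
    rw [Prod.dist_eq]
    simp [Real.dist_eq, abs_of_nonneg hγ, hγ]
  -- key pointwise facts for γ ∈ [0, ε)
  have key : ∀ γ ∈ Set.Ico (0 : ℝ) ε,
      (γ, hfun γ) = g (γ, 0) ∧
      hfun γ ∈ Metric.ball p0 ρ ∧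
      (∀ i, F G Z γ δ (glue Z xbar (hfun γ)) i = 0) ∧
      (∀ p ∈ Metric.ball p0 ρ,
        (∀ i, F G Z γ δ (glue Z xbar p) i = 0) → p = hfun γ) ∧
      LinStable (Jp G Z γ δ (glue Z xbar (hfun γ))) := by
    intro γ hγ
    obtain ⟨hγ0, hγε⟩ := hγ
    have hmem1 : ((γ, (0 : {v : V // v ∉ Z} → ℝ))) ∈ Metric.ball
        (((0 : ℝ), (0 : {v : V // v ∉ Z} → ℝ))) r1 := by
      rw [Metric.mem_ball, hdistγ γ hγ0]; exact lt_of_lt_of_le hγε hεr1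
    have hmem2 : ((γ, (0 : {v : V // v ∉ Z} → ℝ))) ∈ Metric.ball
        (((0 : ℝ), (0 : {v : V // v ∉ Z} → ℝ))) r2 := by
      rw [Metric.mem_ball, hdistγ γ hγ0]; exact lt_of_lt_of_le hγε hεr2
    have hΨg : Ψ (g (γ, 0)) = (γ, 0) := (hball1 hmem1).2
    have hgball : g (γ, 0) ∈ Metric.ball e0 ρ := hball3 hmem2
    have hfst : (g (γ, 0)).1 = γ := congrArg Prod.fst hΨg
    have hpair : (γ, hfun γ) = g (γ, 0) := by
      rw [hfundef]
      exact Prod.ext (hfst.symm) rfl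
    have hΦg : Phi G Z δ xbar (γ, hfun γ) = 0 := by
      rw [hpair]
      exact congrArg Prod.snd hΨg
    have hUmem : hfun γ ∈ Metric.ball p0 ρ := by
      have h1 : dist (hfun γ) p0 ≤ dist (g (γ, 0)) e0 := by
        rw [← hpair, Prod.dist_eq]
        exact le_max_right _ _
      exact lt_of_le_of_lt h1 (Metric.mem_ball.mp hgball)
    have hsteady : ∀ i, F G Z γ δ (glue Z xbar (hfun γ)) i = 0 := by
      intro i
      by_cases hi : i ∈ Z
      · rw [F, if_pos hi]
      · exact congrFun hΦg ⟨i, hi⟩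
    have hgsource : g (γ, 0) ∈ ph.source := (hball2 hgball).1
    have huni : ∀ p ∈ Metric.ball p0 ρ,
        (∀ i, F G Z γ δ (glue Z xbar p) i = 0) → p = hfun γ := by
      intro p hpU hpst
      have hpball : ((γ, p)) ∈ Metric.ball e0 ρ := by
        rw [Metric.mem_ball, Prod.dist_eq]
        apply max_lt
        · rw [Real.dist_eq, sub_zero, abs_of_nonneg hγ0]
          exact lt_of_lt_of_le hγε hερ
        · exact Metric.mem_ball.mp hpU
      have hpsource : ((γ, p)) ∈ ph.source := (hball2 hpball).1
      have hΨp : Ψ (γ, p) = (γ, 0) := by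
        rw [hΨdef]
        refine Prod.ext rfl ?_
        funext i
        exact hpst i.val
      have hinj := ph.injOn
      have heq2 : ((γ, p)) = g (γ, 0) := by
        apply hinj hpsource hgsource
        show Ψ (γ, p) = Ψ (g (γ, 0))
        rw [hΨp, hΨg]
      have := congrArg Prod.snd heq2
      simpa [← hpair] using this
    have hstab : LinStable (Jp G Z γ δ (glue Z xbar (hfun γ))) := by
      apply hηstab
      have hclose := (hball2 hgball).2
      intro i j
      have := hclose i j
      rw [← hpair] at this
      exact this
    exact ⟨hpair, hUmem, hsteady, huni, hstab⟩
  -- assemble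
  refine ⟨ε, hεpos, Metric.ball p0 ρ, Metric.isOpen_ball, Metric.mem_ball_self hρpos,
    hfun, ⟨?_, ?_, ?_⟩, ?_⟩
  · -- C¹ smoothness on [0, ε)
    have hmaps : Set.MapsTo (fun γ : ℝ => ((γ, (0 : {v : V // v ∉ Z} → ℝ))))
        (Set.Ico 0 ε) u := by
      intro γ hγ
      have hmem1 : ((γ, (0 : {v : V // v ∉ Z} → ℝ))) ∈ Metric.ball
          (((0 : ℝ), (0 : {v : V // v ∉ Z} → ℝ))) r1 := by
        rw [Metric.mem_ball, hdistγ γ hγ.1]; exact lt_of_lt_of_le hγ.2 hεr1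
      exact (hball1 hmem1).1
    have hinner : ContDiffOn ℝ 1 (fun γ : ℝ => ((γ, (0 : {v : V // v ∉ Z} → ℝ))))
        (Set.Ico 0 ε) := (contDiff_id.prodMk contDiff_const).contDiffOn
    have h2 : ContDiffOn ℝ 1 (fun γ : ℝ => g (γ, 0)) (Set.Ico 0 ε) :=
      hgCu.comp hinner hmaps
    exact contDiff_snd.comp_contDiffOn h2
  · -- h 0 = persuadable part of xbar
    show (g ((0 : ℝ), (0 : {v : V // v ∉ Z} → ℝ))).2 = p0
    rw [hg0]
  · -- main pointwise properties
    intro γ hγ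
    obtain ⟨_, hU, hst, huni, hstab⟩ := key γ hγ
    exact ⟨hU, hst, huni, hstab⟩
  · -- uniqueness of the branch
    intro h' ⟨_, _, hmain'⟩ γ hγ
    obtain ⟨hU', hst', _, _⟩ := hmain' γ hγ
    obtain ⟨_, _, _, huni, _⟩ := key γ hγ
    exact huni (h' γ) hU' hst'
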